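/- Let (π,T,S) be a covariant representation of L on L^p_ν(Ω). Then for every i = 1,…,n one has S_i T_i = 1 and T_i S_i = π(1_{X_i}); consequently each T_i is an isometry of L^p_ν(Ω). -/

import Mathlib

open MeasureTheory
open scoped ENNReal

noncomputable section

/-- The Bernoulli shift space `X = {1,…,n}^ℕ`, modelled as `ℕ → Fin n`. -/
abbrev BSpace (n : ℕ) := ℕ → Fin n

/-- The shift map `φ(x₁,x₂,x₃,…) = (x₂,x₃,…)`. -/
def shift (n : ℕ) (x : BSpace n) : BSpace n := fun k => x (k + 1)

lemma shift_continuous (n : ℕ) : Continuous (shift n) :=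
  continuous_pi fun k => continuous_apply (k + 1)

/-- The shift map as a continuous map. -/
def shiftCM (n : ℕ) : C(BSpace n, BSpace n) := ⟨shift n, shift_continuous n⟩

/-- The preimage section `iy = (i, y₁, y₂, …)` of the shift. -/
def cons (n : ℕ) (i : Fin n) (x : BSpace n) : BSpace n :=
  fun k => Nat.casesOn k i fun m => x m

lemma cons_continuous (n : ℕ) (i : Fin n) : Continuous (cons n i) := by
  apply continuous_pi
  intro k
  cases k with
  | zero => exact continuous_const
  | succ m => exact continuous_apply m

/-- The transfer (Ruelle–Perron–Frobenius) operator
`L(a)(y) = Σ_{x ∈ φ⁻¹(y)} ϱ(x) a(x) = Σ_{i=1}^n ϱ(iy) a(iy)`. -/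
def transfer (n : ℕ) (ϱ : C(BSpace n, ℝ)) (a : C(BSpace n, ℂ)) : C(BSpace n, ℂ) :=
  ⟨fun y => ∑ i : Fin n, (ϱ (cons n i y) : ℂ) * a (cons n i y), by
    refine continuous_finset_sum _ fun i _ => ?_
    exact (Complex.continuous_ofReal.comp (ϱ.continuous.comp (cons_continuous n i))).mul
      (a.continuous.comp (cons_continuous n i))⟩

lemma isClopen_cyl (n : ℕ) (i : Fin n) : IsClopen {x : BSpace n | x 0 = i} :=
  (isClopen_discrete ({i} : Set (Fin n))).preimage (continuous_apply 0)

/-- The power `ϱ^r` of the (strictly positive) potential, as a continuous map. -/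
def rhoPow (n : ℕ) (ϱ : C(BSpace n, ℝ)) (hϱ : ∀ x, 0 < ϱ x) (r : ℝ) : C(BSpace n, ℝ) :=
  ⟨fun x => ϱ x ^ r, ϱ.continuous.rpow_const fun x => Or.inl (hϱ x).ne'⟩

/-- The complex-valued power `ϱ^r` of the potential, as a continuous map. -/
def rhoPowC (n : ℕ) (ϱ : C(BSpace n, ℝ)) (hϱ : ∀ x, 0 < ϱ x) (r : ℝ) : C(BSpace n, ℂ) :=
  ⟨fun x => ((ϱ x ^ r : ℝ) : ℂ), Complex.continuous_ofReal.comp (rhoPow n ϱ hϱ r).continuous⟩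

/-- The continuous function `g·1_{X_i}` (product of `g` with the indicator of the clopen
cylinder `X_i = {x : x₁ = i}`), as a complex-valued continuous map. -/
def wInd (n : ℕ) (i : Fin n) (g : C(BSpace n, ℝ)) : C(BSpace n, ℂ) :=
  ⟨fun x => if x 0 = i then (g x : ℂ) else 0, by
    refine Continuous.if (fun x hx => ?_)
      (Complex.continuous_ofReal.comp g.continuous) continuous_const
    rw [(isClopen_cyl n i).frontier_eq] at hx
    exact absurd hx (Set.notMem_empty x)⟩

/-- The operator `T_i = π(ϱ^{-1/p}·1_{X_i}) T`. -/
def TOp {A : Type*} [Mul A] (n : ℕ) (ϱ : C(BSpace n, ℝ)) (hϱ : ∀ x, 0 < ϱ x) (p : ℝ≥0∞)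
    (π : C(BSpace n, ℂ) → A) (T : A) (i : Fin n) : A :=
  π (wInd n i (rhoPow n ϱ hϱ (-(1 / p.toReal)))) * T

/-- The operator `S_i = S π(ϱ^{-1/q}·1_{X_i})`, where `1/q = 1 - 1/p`
(with the convention `ϱ^{-1/q} = ϱ^0 = 1` when `p = 1`). -/
def SOp {A : Type*} [Mul A] (n : ℕ) (ϱ : C(BSpace n, ℝ)) (hϱ : ∀ x, 0 < ϱ x) (p : ℝ≥0∞)
    (π : C(BSpace n, ℂ) → A) (S : A) (i : Fin n) : A :=
  S * π (wInd n i (rhoPow n ϱ hϱ (-(1 - 1 / p.toReal))))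

/-- The indicator of the cylinder set `X_{i₁…i_N} = {x : x₁ = i₁, …, x_N = i_N}`
determined by the word `w = (i₁,…,i_N)`, as a continuous map. -/
def cylCM (n N : ℕ) (w : Fin N → Fin n) : C(BSpace n, ℂ) :=
  ⟨fun x => if (fun k : Fin N => x k) = w then 1 else 0, by
    have hclopen : IsClopen {x : BSpace n | (fun k : Fin N => x k) = w} :=
      (isClopen_discrete ({w} : Set (Fin N → Fin n))).preimage
        (continuous_pi fun k => continuous_apply (k : ℕ))
    refine Continuous.if (fun x hx => ?_) continuous_const continuous_const
    rw [hclopen.frontier_eq] at hx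
    exact absurd hx (Set.notMem_empty x)⟩


lemma cons_zero' (n : ℕ) (j : Fin n) (y : BSpace n) : cons n j y 0 = j := rfl

lemma wInd_mul_rho (n : ℕ) (ϱ : C(BSpace n, ℝ)) (hϱ : ∀ x, 0 < ϱ x) (a b : ℝ) (i : Fin n) :
    wInd n i (rhoPow n ϱ hϱ a) * wInd n i (rhoPow n ϱ hϱ b)
      = wInd n i (rhoPow n ϱ hϱ (a + b)) := by
  ext x
  simp only [ContinuousMap.mul_apply, wInd, rhoPow, ContinuousMap.coe_mk]
  split_ifs
  · rw [← Complex.ofReal_mul, ← Real.rpow_add (hϱ x)]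
  · simp

lemma transfer_wInd_neg_one (n : ℕ) (ϱ : C(BSpace n, ℝ)) (hϱ : ∀ x, 0 < ϱ x) (i : Fin n) :
    transfer n ϱ (wInd n i (rhoPow n ϱ hϱ (-1))) = 1 := by
  ext y
  simp only [transfer, wInd, rhoPow, ContinuousMap.coe_mk, ContinuousMap.one_apply]
  rw [Finset.sum_eq_single i]
  · rw [if_pos (cons_zero' n i y), Real.rpow_neg_one, ← Complex.ofReal_mul,
      mul_inv_cancel₀ (hϱ _).ne']
    simp
  · intro j _ hj
    rw [cons_zero' n j y, if_neg hj, mul_zero]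
  · intro h
    exact absurd (Finset.mem_univ i) h

lemma ind_mul_wInd (n : ℕ) (i j : Fin n) (g : C(BSpace n, ℝ)) :
    wInd n i 1 * wInd n j g = if j = i then wInd n j g else 0 := by
  ext x
  by_cases hji : j = i
  · subst hji
    simp only [if_pos rfl, ContinuousMap.mul_apply, wInd, ContinuousMap.coe_mk,
      ContinuousMap.one_apply]
    split_ifs with h <;> simp [wInd, h]
  · simp only [if_neg hji, ContinuousMap.mul_apply, wInd, ContinuousMap.coe_mk,
      ContinuousMap.one_apply, ContinuousMap.zero_apply]
    split_ifs with h1 h2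
    · exact absurd (h2.symm.trans h1) hji
    · simp
    · simp
    · simp

/-- For a covariant representation `(π,T,S)` of `L` on `L^p_ν(Ω)`:
for every `i = 1,…,n` one has `S_i T_i = 1` and `T_i S_i = π(1_{X_i})`;
consequently each `T_i` is an isometry of `L^p_ν(Ω)`. -/
theorem stmt_6 (n : ℕ) (hn : 2 ≤ n)
    (ϱ : C(BSpace n, ℝ)) (hϱpos : ∀ x, 0 < ϱ x)
    (hϱsum : ∀ y : BSpace n, ∑ i : Fin n, ϱ (cons n i y) = 1)
    {Ω : Type*} [MeasurableSpace Ω] (ν : Measure Ω)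
    (p : ℝ≥0∞) [Fact (1 ≤ p)] (hp : p ≠ ∞)
    (π : C(BSpace n, ℂ) →ₐ[ℂ] (Lp ℂ p ν →L[ℂ] Lp ℂ p ν))
    (T S : Lp ℂ p ν →L[ℂ] Lp ℂ p ν)
    (hπcontr : ∀ a : C(BSpace n, ℂ), ‖π a‖ ≤ ‖a‖)
    (hT : ‖T‖ ≤ 1) (hS : ‖S‖ ≤ 1)
    (hcov1 : ∀ a : C(BSpace n, ℂ), S * π a * T = π (transfer n ϱ a))
    (hcov2 : ∀ a : C(BSpace n, ℂ), T * π a = π (a.comp (shiftCM n)) * T)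
    (hTi : ∀ i : Fin n, ‖TOp n ϱ hϱpos p (fun a => π a) T i‖ ≤ 1)
    (hSi : ∀ i : Fin n, ‖SOp n ϱ hϱpos p (fun a => π a) S i‖ ≤ 1)
    (hsum : ∑ i : Fin n,
      TOp n ϱ hϱpos p (fun a => π a) T i * SOp n ϱ hϱpos p (fun a => π a) S i = 1)
    (i : Fin n) :
    SOp n ϱ hϱpos p (fun a => π a) S i * TOp n ϱ hϱpos p (fun a => π a) T i = 1 ∧
    TOp n ϱ hϱpos p (fun a => π a) T i * SOp n ϱ hϱpos p (fun a => π a) S i = π (wInd n i 1) ∧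
    ∀ f : Lp ℂ p ν, ‖TOp n ϱ hϱpos p (fun a => π a) T i f‖ = ‖f‖ := by
  classical
  simp only [TOp, SOp] at hsum hTi hSi ⊢
  -- abbreviations
  set wp : Fin n → C(BSpace n, ℂ) :=
    fun j => wInd n j (rhoPow n ϱ hϱpos (-(1 / p.toReal))) with hwp
  set wq : Fin n → C(BSpace n, ℂ) :=
    fun j => wInd n j (rhoPow n ϱ hϱpos (-(1 - 1 / p.toReal))) with hwq
  have hw1 : ∀ j : Fin n, wq j * wp j = wInd n j (rhoPow n ϱ hϱpos (-1)) := by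
    intro j
    have he : -(1 - 1 / p.toReal) + -(1 / p.toReal) = (-1 : ℝ) := by ring
    rw [hwq, hwp, wInd_mul_rho, he]
  -- S_j T_j = 1 for every j
  have hST : ∀ j : Fin n, (S * π (wq j)) * (π (wp j) * T) = 1 := by
    intro j
    have hassoc : (S * π (wq j)) * (π (wp j) * T) = S * π (wq j * wp j) * T := by
      rw [map_mul]; noncomm_ring
    rw [hassoc, hw1 j, hcov1, transfer_wInd_neg_one, map_one]
  -- π(1_{X_i}) absorbs T_j
  have hproj : ∀ j : Fin n, π (wInd n i 1) * (π (wp j) * T)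
      = if j = i then π (wp j) * T else 0 := by
    intro j
    rw [← mul_assoc, ← map_mul, ind_mul_wInd]
    split_ifs with h
    · rfl
    · rw [map_zero, zero_mul]
  -- T_i S_i = π(1_{X_i})
  have hTS : (π (wp i) * T) * (S * π (wq i)) = π (wInd n i 1) := by
    symm
    calc π (wInd n i 1)
        = π (wInd n i 1) * ∑ j : Fin n, (π (wp j) * T) * (S * π (wq j)) := by
          rw [hsum, mul_one]
      _ = ∑ j : Fin n, (π (wInd n i 1) * (π (wp j) * T)) * (S * π (wq j)) := by
          rw [Finset.mul_sum]
          exact Finset.sum_congr rfl fun j _ => by noncomm_ring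
      _ = ∑ j : Fin n, (if j = i then π (wp j) * T else 0) * (S * π (wq j)) := by
          exact Finset.sum_congr rfl fun j _ => by rw [hproj j]
      _ = (π (wp i) * T) * (S * π (wq i)) := by
          rw [Finset.sum_eq_single i
            (fun j _ hj => by rw [if_neg hj, zero_mul])
            (fun h => absurd (Finset.mem_univ i) h), if_pos rfl]
  refine ⟨hST i, hTS, fun f => ?_⟩
  refine le_antisymm ?_ ?_
  · calc ‖(π (wp i) * T) f‖ ≤ ‖π (wp i) * T‖ * ‖f‖ :=
          ContinuousLinearMap.le_opNorm _ f
      _ ≤ 1 * ‖f‖ := by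
          exact mul_le_mul_of_nonneg_right (hTi i) (norm_nonneg f)
      _ = ‖f‖ := one_mul _
  · have hf : (S * π (wq i)) ((π (wp i) * T) f) = f := by
      have := congrArg (fun L : Lp ℂ p ν →L[ℂ] Lp ℂ p ν => L f) (hST i)
      simpa using this
    calc ‖f‖ = ‖(S * π (wq i)) ((π (wp i) * T) f)‖ := by rw [hf]
      _ ≤ ‖S * π (wq i)‖ * ‖(π (wp i) * T) f‖ := ContinuousLinearMap.le_opNorm _ _
      _ ≤ 1 * ‖(π (wp i) * T) f‖ :=
          mul_le_mul_of_nonneg_right (hSi i) (norm_nonneg _)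
      _ = ‖(π (wp i) * T) f‖ := one_mul _

end
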